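/- For r ≥ 3 and a ≥ 0, the function ψ_r(a;·) is strictly monotone on each interval between consecutive zeroes of its derivative ψ_{r−1}(a;·). -/

import Mathlib

open MeasureTheory intervalIntegral Set

/-- essential sup norm on ℝ, as a real number -/
noncomputable def nrm (f : ℝ → ℝ) : ℝ := (eLpNorm f ⊤ volume).toReal

/-- supremum norm on ℝ -/
noncomputable def supNorm (f : ℝ → ℝ) : ℝ := ⨆ t, |f t|

/-- ψ₁ on the base interval [0, a+2] -/
noncomputable def psi1base (a t : ℝ) : ℝ :=
  if t ≤ 1 then t - 1 else if t ≤ a + 1 then 0 else t - a - 1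

/-- ψ₁(a;·): even (4+2a)-periodic extension of `psi1base a` -/
noncomputable def psi1 (a : ℝ) : ℝ → ℝ := fun t =>
  let T := 4 + 2 * a
  let s := t - T * ⌊t / T⌋
  if s ≤ a + 2 then psi1base a s else psi1base a (T - s)

/-- ψ₂ on the base interval [0, a+2] -/
noncomputable def psi2base (a t : ℝ) : ℝ :=
  if t ≤ 1 then (t - 1) ^ 2 / 2 - 1 / 2
  else if t ≤ a + 1 then -(1 / 2)
  else (t - a - 1) ^ 2 / 2 - 1 / 2

/-- ψ₂(a;·): odd (4+2a)-periodic extension of `psi2base a` -/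
noncomputable def psi2 (a : ℝ) : ℝ → ℝ := fun t =>
  let T := 4 + 2 * a
  let s := t - T * ⌊t / T⌋
  if s ≤ a + 2 then psi2base a s else -psi2base a (T - s)

/-- `IsPsi a r f` : f is the (r-1)-th (4+2a)-periodic integral with zero mean
of ψ₁(a;·), i.e. f = ψ_r(a;·). -/
def IsPsi (a : ℝ) : ℕ → (ℝ → ℝ) → Prop
  | 0, _ => False
  | 1, f => f = psi1 a
  | (n + 2), f => ∃ g, IsPsi a (n + 1) g ∧
      (∀ s t : ℝ, f t - f s = ∫ u in s..t, g u) ∧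
      (∫ t in (0:ℝ)..(4 + 2 * a), f t) = 0

/-- φ₀(t) = sgn (sin t) -/
noncomputable def phi0 (t : ℝ) : ℝ := Real.sign (Real.sin t)

/-- `IsPhi r f` : f is the Euler perfect spline φ_r, the r-th 2π-periodic
integral with zero mean of φ₀. -/
noncomputable def IsPhi : ℕ → (ℝ → ℝ) → Prop
  | 0, f => f = phi0
  | (n + 1), f => ∃ g, IsPhi n g ∧
      (∀ s t : ℝ, f t - f s = ∫ u in s..t, g u) ∧
      (∫ t in (0:ℝ)..(2 * Real.pi), f t) = 0

/-- membership in L^r_{∞,∞}(ℝ): x^{(r-1)} locally absolutely continuous,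
x and x^{(r)} essentially bounded. -/
def MemL (r : ℕ) (x : ℝ → ℝ) : Prop :=
  ContDiff ℝ (r - 1 : ℕ) x ∧
  (∀ s t : ℝ, iteratedDeriv (r - 1) x t - iteratedDeriv (r - 1) x s =
      ∫ u in s..t, iteratedDeriv r x u) ∧
  MemLp x ⊤ volume ∧ MemLp (iteratedDeriv r x) ⊤ volume

/-- the spline Ψ_{a,b,λ}(t) = b · f(λ t), where f = ψ_r(a;·) -/
noncomputable def Psi (b lam : ℝ) (f : ℝ → ℝ) : ℝ → ℝ := fun t => b * f (lam * t)
lemma psi1base_meas (a : ℝ) : Measurable (psi1base a) := by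
  unfold psi1base
  exact Measurable.ite (measurableSet_le measurable_id measurable_const)
    (measurable_id.sub measurable_const)
    (Measurable.ite (measurableSet_le measurable_id measurable_const)
      measurable_const ((measurable_id.sub measurable_const).sub measurable_const))

lemma frac_meas (a : ℝ) : Measurable (fun t : ℝ => t - (4 + 2 * a) * ⌊t / (4 + 2 * a)⌋) := by
  apply measurable_id.sub
  apply measurable_const.mul
  exact Measurable.comp (measurable_of_countable (Int.cast : ℤ → ℝ)) (Measurable.floor (measurable_id.div_const _))

lemma psi1_meas (a : ℝ) : Measurable (psi1 a) := by
  unfold psi1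
  simp only []
  apply Measurable.ite (measurableSet_le (frac_meas a) measurable_const)
  · exact (psi1base_meas a).comp (frac_meas a)
  · exact (psi1base_meas a).comp (measurable_const.sub (frac_meas a))

lemma frac_mem (a : ℝ) (ha : 0 ≤ a) (t : ℝ) :
    0 ≤ t - (4 + 2 * a) * ⌊t / (4 + 2 * a)⌋ ∧
    t - (4 + 2 * a) * ⌊t / (4 + 2 * a)⌋ < 4 + 2 * a := by
  have hT : (0:ℝ) < 4 + 2 * a := by linarith
  have h1 : (⌊t / (4 + 2 * a)⌋ : ℝ) ≤ t / (4 + 2 * a) := Int.floor_le _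
  have h2 : t / (4 + 2 * a) < ⌊t / (4 + 2 * a)⌋ + 1 := Int.lt_floor_add_one _
  have e : (4 + 2 * a) * (t / (4 + 2 * a)) = t := by field_simp
  constructor
  · nlinarith [mul_le_mul_of_nonneg_left h1 hT.le]
  · nlinarith [mul_lt_mul_of_pos_left h2 hT]

lemma psi1_bound (a : ℝ) (ha : 0 ≤ a) (t : ℝ) : |psi1 a t| ≤ 1 := by
  obtain ⟨h0, h1⟩ := frac_mem a ha t
  unfold psi1
  simp only []
  set s := t - (4 + 2 * a) * ⌊t / (4 + 2 * a)⌋ with hs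
  have key : ∀ x : ℝ, 0 ≤ x → x ≤ a + 2 → |psi1base a x| ≤ 1 := by
    intro x hx0 hx2
    unfold psi1base
    split_ifs with h h' <;> rw [abs_le] <;> constructor <;> linarith
  split_ifs with h
  · exact key s h0 h
  · exact key ((4 + 2 * a) - s) (by linarith) (by push_neg at h; linarith)

lemma psi1_ii (a : ℝ) (ha : 0 ≤ a) (s t : ℝ) : IntervalIntegrable (psi1 a) volume s t := by
  constructor <;>
  · apply Measure.integrableOn_of_bounded (M := 1)
    · exact (measure_Ioc_lt_top).ne
    · exact (psi1_meas a).aestronglyMeasurable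
    · exact Filter.Eventually.of_forall fun x => by
        simpa using psi1_bound a ha x

lemma psi_ii (a : ℝ) (ha : 0 ≤ a) : ∀ n (f : ℝ → ℝ), IsPsi a n f →
    ∀ s t : ℝ, IntervalIntegrable f volume s t := by
  intro n
  induction n using Nat.strong_induction_on with
  | _ n ih =>
    match n with
    | 0 => intro f hf; exact absurd hf id
    | 1 => intro f hf; rw [show f = psi1 a from hf]; exact psi1_ii a ha
    | (m + 2) =>
      rintro f ⟨g, hg, hfg, _⟩ s t
      have hgi : ∀ s t : ℝ, IntervalIntegrable g volume s t :=
        ih (m + 1) (by omega) g hg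
      have hc : Continuous f := by
        have : f = fun t => f 0 + ∫ u in (0:ℝ)..t, g u := by
          funext x; have := hfg 0 x; linarith
        rw [this]
        exact continuous_const.add (intervalIntegral.continuous_primitive hgi 0)
      exact hc.intervalIntegrable s t

lemma psi_cont (a : ℝ) (ha : 0 ≤ a) (n : ℕ) (f : ℝ → ℝ) (hf : IsPsi a (n + 2) f) :
    Continuous f := by
  obtain ⟨g, hg, hfg, _⟩ := hf
  have hgi : ∀ s t : ℝ, IntervalIntegrable g volume s t := psi_ii a ha (n + 1) g hg
  have : f = fun t => f 0 + ∫ u in (0:ℝ)..t, g u := by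
    funext x; have := hfg 0 x; linarith
  rw [this]
  exact continuous_const.add (intervalIntegral.continuous_primitive hgi 0)

lemma psi_unique (a : ℝ) (ha : 0 ≤ a) : ∀ n (u v : ℝ → ℝ),
    IsPsi a n u → IsPsi a n v → u = v := by
  intro n
  induction n using Nat.strong_induction_on with
  | _ n ih =>
    match n with
    | 0 => intro u v hu; exact absurd hu id
    | 1 => intro u v hu hv; rw [show u = psi1 a from hu, show v = psi1 a from hv]
    | (m + 2) =>
      rintro u v ⟨gu, hgu, hu, hu0⟩ ⟨gv, hgv, hv, hv0⟩
      have hgg : gu = gv := ih (m + 1) (by omega) gu gv hgu hgv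
      have hconst : ∀ t : ℝ, u t = v t + (u 0 - v 0) := by
        intro t
        have h1 := hu 0 t
        have h2 := hv 0 t
        rw [hgg] at h1
        linarith
      have hvi : IntervalIntegrable v volume 0 (4 + 2 * a) :=
        psi_ii a ha (m + 2) v ⟨gv, hgv, hv, hv0⟩ 0 (4 + 2 * a)
      have : (∫ t in (0:ℝ)..(4 + 2 * a), u t)
          = (∫ t in (0:ℝ)..(4 + 2 * a), v t) + (u 0 - v 0) * (4 + 2 * a) := by
        calc (∫ t in (0:ℝ)..(4 + 2 * a), u t)
            = ∫ t in (0:ℝ)..(4 + 2 * a), (v t + (u 0 - v 0)) := by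
              congr 1; funext t; exact hconst t
          _ = (∫ t in (0:ℝ)..(4 + 2 * a), v t)
              + ∫ t in (0:ℝ)..(4 + 2 * a), (u 0 - v 0) :=
              intervalIntegral.integral_add hvi intervalIntegrable_const
          _ = _ := by rw [intervalIntegral.integral_const, smul_eq_mul]; ring
      rw [hu0, hv0] at this
      have hC : u 0 - v 0 = 0 := by
        have hT : (0:ℝ) < 4 + 2 * a := by linarith
        nlinarith
      funext t; rw [hconst t, hC]; ring


theorem stmt7 (r : ℕ) (hr : 3 ≤ r) (a : ℝ) (ha : 0 ≤ a) (f g : ℝ → ℝ)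
    (hf : IsPsi a r f) (hg : IsPsi a (r - 1) g)
    (c d : ℝ) (hcd : c < d) (hc : g c = 0) (hd : g d = 0)
    (hmid : ∀ t ∈ Set.Ioo c d, g t ≠ 0) :
    StrictMonoOn f (Set.Icc c d) ∨ StrictAntiOn f (Set.Icc c d) := by 
  obtain ⟨n, rfl⟩ : ∃ n, r = n + 3 := ⟨r - 3, by omega⟩
  have hg' : IsPsi a (n + 2) g := by
    have : n + 3 - 1 = n + 2 := by omega
    rwa [this] at hg
  obtain ⟨g0, hg0, hfg, hf0⟩ := hf
  have hgeq : g0 = g := psi_unique a ha (n + 2) g0 g hg0 hg'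
  subst hgeq
  have hgc : Continuous g0 := psi_cont a ha n g0 hg'
  -- sign dichotomy
  have t0mem : (c + d) / 2 ∈ Set.Ioo c d := ⟨by linarith, by linarith⟩
  have key : ∀ s t : ℝ, s ∈ Set.Ioo c d → t ∈ Set.Ioo c d → 0 < g0 s → g0 t ≤ 0 → False := by
    intro s t hs ht hps hnt
    have hnt' : g0 t < 0 := lt_of_le_of_ne hnt (hmid t ht)
    have h0 : (0:ℝ) ∈ Set.uIcc (g0 s) (g0 t) := by
      rw [Set.mem_uIcc]; right; exact ⟨hnt'.le, hps.le⟩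
    obtain ⟨z, hz, hz0⟩ := intermediate_value_uIcc (hgc.continuousOn (s := Set.uIcc s t)) h0
    have : z ∈ Set.Ioo c d := by
      have hsub : Set.uIcc s t ⊆ Set.Ioo c d := by
        exact Set.ordConnected_Ioo.uIcc_subset hs ht
      exact hsub hz
    exact hmid z this hz0
  rcases lt_or_gt_of_ne (hmid _ t0mem) with hneg | hpos
  · -- g0 < 0 on Ioo c d, f strictly anti
    right
    have hneg' : ∀ t ∈ Set.Ioo c d, g0 t < 0 := by
      intro t ht
      by_contra h
      push_neg at h
      have : 0 < g0 t := lt_of_le_of_ne h (Ne.symm (hmid t ht))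
      exact key t _ ht t0mem this hneg.le
    intro s hs t ht hst
    have hint : (0:ℝ) < ∫ u in s..t, -g0 u := by
      apply intervalIntegral_pos_of_pos_on ((hgc.neg).intervalIntegrable s t) _ hst
      intro x hx
      have : x ∈ Set.Ioo c d := ⟨lt_of_le_of_lt hs.1 hx.1, lt_of_lt_of_le hx.2 ht.2⟩
      simpa using hneg' x this
    rw [intervalIntegral.integral_neg] at hint
    have := hfg s t
    linarith
  · -- g0 > 0 on Ioo c d, f strictly mono
    left
    have hpos' : ∀ t ∈ Set.Ioo c d, 0 < g0 t := by
      intro t ht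
      by_contra h
      push_neg at h
      exact key _ t t0mem ht hpos h
    intro s hs t ht hst
    have hint : (0:ℝ) < ∫ u in s..t, g0 u := by
      apply intervalIntegral_pos_of_pos_on (hgc.intervalIntegrable s t) _ hst
      intro x hx
      exact hpos' x ⟨lt_of_le_of_lt hs.1 hx.1, lt_of_lt_of_le hx.2 ht.2⟩
    have := hfg s t
    linarith
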